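/- Let G be a connected graph that is δ-hyperbolic (δ ≥ 0 real), let v₀ be a vertex of G, and let r be a positive integer with r ≥ δ. Then any well-order ⪯ on the vertex set of G whose least element is v₀ and which satisfies u ⪯ v ⟹ d(v₀,u) ≤ d(v₀,v) (in particular, any breadth-first search order starting at v₀) is a (2r, r+2δ)*-dismantling order of G: every vertex v ≠ v₀ admits a vertex u ≠ v with u ⪯ v and B_{2r}(v) ∩ X_v ⊆ B_{r+2δ}(u), where X_v = {w : w ⪯ v}. -/

import Mathlib

open SimpleGraph

variable {V : Type*}

/-- The ball of (real) radius `r` around `v` in `G` (w.r.t. the graph distance). -/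
def gBall (G : SimpleGraph V) (v : V) (r : ℝ) : Set V :=
  {x : V | (G.dist v x : ℝ) ≤ r}

/-- The interval `I(u,v)`: vertices lying on shortest `(u,v)`-paths. -/
def gInterval (G : SimpleGraph V) (u v : V) : Set V :=
  {x : V | G.dist u x + G.dist x v = G.dist u v}

/-- Gromov `δ`-hyperbolicity via the four-point condition. -/
def IsHyperbolic {W : Type*} (G : SimpleGraph W) (δ : ℝ) : Prop :=
  ∀ u v x y : W,
    (G.dist u v : ℝ) + (G.dist x y : ℝ) ≤
      max ((G.dist u x : ℝ) + (G.dist v y : ℝ)) ((G.dist u y : ℝ) + (G.dist v x : ℝ)) + 2 * δ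

/-- `(s,s')*`-dismantlability: there is a well-order `lt` on the vertices such that every
vertex `v` which is not the least element is eliminated by some earlier vertex `u`,
i.e. `B_s(v) ∩ X_v ⊆ B_{s'}(u)` where `X_v = {w : w ⪯ v}`. -/
def StarDismantlable (G : SimpleGraph V) (s s' : ℝ) : Prop :=
  ∃ lt : V → V → Prop, IsWellOrder V lt ∧
    ∀ v : V, (∃ w : V, lt w v) →
      ∃ u : V, lt u v ∧ gBall G v s ∩ {w : V | lt w v ∨ w = v} ⊆ gBall G u s'

/-- The ball of radius `r` around `v` in the subgraph of `G` induced on `V \ {u}`. -/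
def gBallRemove (G : SimpleGraph V) (u v : V) (r : ℝ) : Set V :=
  {x : V | ∃ (hv : v ∈ {w : V | w ≠ u}) (hx : x ∈ {w : V | w ≠ u}),
    (G.induce {w : V | w ≠ u}).Reachable ⟨v, hv⟩ ⟨x, hx⟩ ∧
    ((G.induce {w : V | w ≠ u}).dist ⟨v, hv⟩ ⟨x, hx⟩ : ℝ) ≤ r}

/-- `(s,s')`-dismantlability: there is a well-order `lt` on the vertices such that every
vertex `v` which is not the least element is eliminated by an earlier vertex `u`, i.e.
`B_s(v, G−u) ∩ X_v ⊆ B_{s'}(u)`. -/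
def Dismantlable (G : SimpleGraph V) (s s' : ℝ) : Prop :=
  ∃ lt : V → V → Prop, IsWellOrder V lt ∧
    ∀ v : V, (∃ w : V, lt w v) →
      ∃ u : V, lt u v ∧ gBallRemove G u v s ∩ {w : V | lt w v ∨ w = v} ⊆ gBall G u s'

/-- Weak modularity: the triangle and quadrangle conditions. -/
def WeaklyModular (G : SimpleGraph V) : Prop :=
  (∀ u v w : V, G.dist v w = 1 → 1 < G.dist u v → G.dist u v = G.dist u w →
    ∃ x : V, G.Adj v x ∧ G.Adj w x ∧ G.dist u x + 1 = G.dist u v) ∧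
  (∀ u v w z : V, G.dist v z = 1 → G.dist w z = 1 → G.dist v w = 2 →
    2 ≤ G.dist u v → G.dist u v = G.dist u w → G.dist u z = G.dist u v + 1 →
    ∃ x : V, G.Adj v x ∧ G.Adj w x ∧ G.dist u x + 1 = G.dist u v)

/-- `u`, `v`, `w` form a metric triangle: the pairwise intervals intersect only in the
common end-vertices. -/
def MetricTriangle (G : SimpleGraph V) (u v w : V) : Prop :=
  gInterval G u v ∩ gInterval G v w = {v} ∧
  gInterval G v w ∩ gInterval G w u = {w} ∧
  gInterval G w u ∩ gInterval G u v = {u}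

lemma dist_getVert_le {V : Type*} {G : SimpleGraph V} (hG : G.Connected) {a b : V}
    (p : G.Walk a b) (i : ℕ) : G.dist a (p.getVert i) ≤ i := by
  induction i with
  | zero => simp
  | succ i ih =>
    by_cases hi : i < p.length
    · have hadj := p.adj_getVert_succ hi
      calc G.dist a (p.getVert (i+1)) ≤ G.dist a (p.getVert i) + G.dist (p.getVert i) (p.getVert (i+1)) :=
            hG.dist_triangle
        _ ≤ i + 1 := by
            have : G.dist (p.getVert i) (p.getVert (i+1)) ≤ 1 := G.dist_le (hadj.toWalk)
            omega
    · rw [p.getVert_of_length_le (by omega), ← p.getVert_of_length_le (le_of_not_gt hi)]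
      omega

lemma dist_getVert_right_le {V : Type*} {G : SimpleGraph V} (hG : G.Connected) {a b : V}
    (p : G.Walk a b) (i : ℕ) (hi : i ≤ p.length) : G.dist (p.getVert i) b ≤ p.length - i := by
  have h := dist_getVert_le hG p.reverse (p.length - i)
  rw [p.getVert_reverse] at h
  have : p.length - (p.length - i) = i := by omega
  rw [this] at h
  rw [SimpleGraph.dist_comm]
  exact h

theorem statement1 (V : Type*) (G : SimpleGraph V) (hG : G.Connected)
    (δ : ℝ) (hδ : 0 ≤ δ) (hhyp : IsHyperbolic G δ)
    (r : ℕ) (hr : 0 < r) (hrδ : δ ≤ (r : ℝ))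
    (v₀ : V) (lt : V → V → Prop) (hwo : IsWellOrder V lt)
    (hleast : ∀ v : V, v ≠ v₀ → lt v₀ v)
    (hmono : ∀ u v : V, lt u v → G.dist v₀ u ≤ G.dist v₀ v) :
    ∀ v : V, v ≠ v₀ → ∃ u : V, u ≠ v ∧ lt u v ∧
      gBall G v (2 * (r : ℝ)) ∩ {w : V | lt w v ∨ w = v} ⊆ gBall G u ((r : ℝ) + 2 * δ) := by

  intro v hv
  set D := G.dist v₀ v with hD
  have hDpos : 0 < D := hG.pos_dist_of_ne (Ne.symm hv)
  by_cases hcase : D ≤ r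
  · refine ⟨v₀, Ne.symm hv, hleast v hv, ?_⟩
    rintro w ⟨_, hw2⟩
    have hwle : G.dist v₀ w ≤ D := by
      rcases hw2 with h | rfl
      · exact hmono w v h
      · rfl
    simp only [gBall, Set.mem_setOf_eq]
    have : (G.dist v₀ w : ℝ) ≤ (r : ℝ) := by exact_mod_cast le_trans hwle hcase
    linarith
  · push_neg at hcase
    obtain ⟨p, hp⟩ := hG.exists_walk_length_eq_dist v₀ v
    set u := p.getVert (D - r) with hu
    have hu1 : G.dist v₀ u ≤ D - r := dist_getVert_le hG p (D - r)
    have hu2 : G.dist u v ≤ r := by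
      have h := dist_getVert_right_le hG p (D - r) (by omega)
      rw [hp, ← hu] at h; omega
    have huv : G.dist v₀ u < D := by omega
    have hune : u ≠ v := fun h => by rw [h] at huv; omega
    have hltuv : lt u v := by
      rcases (or_iff_not_imp_left.2 fun h1 => or_iff_not_imp_right.2 fun h2 => hwo.trichotomous u v h1 h2) with h | h | h
      · exact h
      · exact absurd h hune
      · exact absurd (hmono v u h) (by omega)
    refine ⟨u, hune, hltuv, ?_⟩
    rintro w ⟨hw1, hw2⟩
    simp only [gBall, Set.mem_setOf_eq] at hw1 ⊢
    have hwle : (G.dist v₀ w : ℝ) ≤ D := by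
      rcases hw2 with h | rfl
      · exact_mod_cast hmono w v h
      · norm_num [hD]
    have key := hhyp w u v₀ v
    have h1 : (G.dist w v₀ : ℝ) = (G.dist v₀ w : ℝ) := by
      rw [SimpleGraph.dist_comm (u := w) (v := v₀)]
    have h2 : (G.dist w v : ℝ) = (G.dist v w : ℝ) := by
      rw [SimpleGraph.dist_comm (u := w) (v := v)]
    have hu1' : (G.dist v₀ u : ℝ) ≤ (D : ℝ) - (r : ℝ) := by
      have : (G.dist v₀ u : ℝ) ≤ ((D - r : ℕ) : ℝ) := by exact_mod_cast hu1
      rw [Nat.cast_sub (by omega)] at this; exact this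
    have hu2' : (G.dist u v : ℝ) ≤ (r : ℝ) := by exact_mod_cast hu2
    have h3 : (G.dist u v₀ : ℝ) = (G.dist v₀ u : ℝ) := by
      rw [SimpleGraph.dist_comm (u := u) (v := v₀)]
    have hA : (G.dist w v₀ : ℝ) + (G.dist u v : ℝ) ≤ (D : ℝ) + (r : ℝ) := by
      rw [h1]; linarith
    have hB : (G.dist w v : ℝ) + (G.dist u v₀ : ℝ) ≤ (D : ℝ) + (r : ℝ) := by
      rw [h2, h3]; linarith
    have hmax : max ((G.dist w v₀ : ℝ) + (G.dist u v : ℝ)) ((G.dist w v : ℝ) + (G.dist u v₀ : ℝ))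
        ≤ (D : ℝ) + (r : ℝ) := max_le hA hB
    have hDkey : (G.dist v₀ v : ℝ) = (D : ℝ) := by rw [hD]
    rw [hDkey] at key
    have hfin : (G.dist w u : ℝ) + (D : ℝ) ≤ (D : ℝ) + (r : ℝ) + 2 * δ :=
      le_trans key (by linarith)
    rw [SimpleGraph.dist_comm (u := u) (v := w)]
    linarith
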